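/- Let X ≻ 0 satisfy the Lyapunov equation (A − BK) X + X (A − BK)* + V = 0 with V ≻ 0, and let v be a unit eigenvector of X for its smallest eigenvalue λ_min(X). Then with D = A X^{1/2} − B K X^{1/2}, one has λ_min(X) = (v* V v)² / (v*(D + D*)v)² ≥ λ_min(V)² / (4 ‖D‖₂²). -/

import Mathlib

open Matrix
open scoped ComplexOrder
open scoped Matrix.Norms.L2Operator
open scoped InnerProductSpace


lemma aux_sub_smul_posSemidef {k : ℕ} {M : Matrix (Fin k) (Fin k) ℂ} (hM : M.IsHermitian)
    {c : ℝ} (hc : ∀ i, c ≤ hM.eigenvalues i) : (M - (c:ℂ) • 1).PosSemidef := by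
  set U : Matrix (Fin k) (Fin k) ℂ := (hM.eigenvectorUnitary : Matrix (Fin k) (Fin k) ℂ) with hUdef
  have hU : U * star U = 1 := (Matrix.mem_unitaryGroup_iff).mp hM.eigenvectorUnitary.2
  have key : M - (c:ℂ) • 1 = U * (Matrix.diagonal (fun i => ((hM.eigenvalues i : ℂ) - c))) * Uᴴ := by
    have hspec := hM.spectral_theorem
    have h1 : ((c:ℂ) • 1 : Matrix (Fin k) (Fin k) ℂ) = U * ((c:ℂ) • 1) * Uᴴ := by
      rw [Matrix.mul_smul, mul_one, smul_mul_assoc]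
      rw [show Uᴴ = star U from rfl, hU]
    calc M - (c:ℂ) • 1
        = U * Matrix.diagonal (RCLike.ofReal ∘ hM.eigenvalues) * star U - U * ((c:ℂ) • 1) * Uᴴ := by
          rw [← h1]; conv_lhs => rw [hspec, Unitary.conjStarAlgAut_apply]
      _ = U * (Matrix.diagonal (fun i => ((hM.eigenvalues i : ℂ) - c))) * Uᴴ := by
          rw [show star U = Uᴴ from rfl, ← sub_mul, ← mul_sub, smul_one_eq_diagonal,
            Matrix.diagonal_sub]
          rfl
  rw [key]
  refine Matrix.PosSemidef.mul_mul_conjTranspose_same ?_ U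
  refine Matrix.posSemidef_diagonal_iff.mpr fun i => ?_
  have := hc i
  rw [show ((hM.eigenvalues i : ℂ) - c) = (((hM.eigenvalues i - c : ℝ)) : ℂ) by push_cast; ring]
  exact_mod_cast sub_nonneg.mpr this

lemma aux_dot_le {k : ℕ} (M : Matrix (Fin k) (Fin k) ℂ) (v : Fin k → ℂ)
    (hv1 : star v ⬝ᵥ v = 1) : ‖star v ⬝ᵥ M *ᵥ v‖ ≤ ‖M‖ := by
  let ve : EuclideanSpace ℂ (Fin k) := (WithLp.equiv 2 _).symm v
  have hnv : ‖ve‖ = 1 := by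
    have h : (⟪ve, ve⟫_ℂ) = 1 := by
      rw [EuclideanSpace.inner_eq_star_dotProduct]
      rw [dotProduct_comm]; exact hv1
    have h0 := @inner_self_eq_norm_sq_to_K ℂ _ _ _ _ ve
    rw [h] at h0
    have h2 : ‖ve‖ ^ 2 = 1 := Complex.ofReal_injective (by push_cast; exact h0.symm)
    nlinarith [norm_nonneg ve]
  have h1 : star v ⬝ᵥ M *ᵥ v = ⟪ve, (EuclideanSpace.equiv (Fin k) ℂ).symm (M *ᵥ v)⟫_ℂ := by
    rw [EuclideanSpace.inner_eq_star_dotProduct]; exact dotProduct_comm _ _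
  have h3 : M *ᵥ ve = M *ᵥ v := rfl
  calc ‖star v ⬝ᵥ M *ᵥ v‖ = ‖⟪ve, (EuclideanSpace.equiv (Fin k) ℂ).symm (M *ᵥ v)⟫_ℂ‖ := by rw [h1]
    _ ≤ ‖ve‖ * ‖(EuclideanSpace.equiv (Fin k) ℂ).symm (M *ᵥ v)‖ := norm_inner_le_norm _ _
    _ ≤ ‖ve‖ * (‖M‖ * ‖ve‖) := by
        gcongr
        rw [← h3]
        exact M.l2_opNorm_mulVec ve
    _ = ‖M‖ := by rw [hnv]; ring

/-- Lower bound on the smallest eigenvalue of the closed-loop covariance. -/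
theorem stmt14 {n m : ℕ} (A : Matrix (Fin n) (Fin n) ℂ) (B : Matrix (Fin n) (Fin m) ℂ)
    (K : Matrix (Fin m) (Fin n) ℂ) (V X Xh : Matrix (Fin n) (Fin n) ℂ)
    (hV : V.PosDef) (hX : X.PosDef)
    (hLyap : (A - B * K) * X + X * (A - B * K)ᴴ + V = 0)
    (hXh : Xh.PosSemidef) (hXh2 : Xh * Xh = X)
    (lam lamV : ℝ)
    (hlam : IsLeast (Set.range hX.1.eigenvalues) lam)
    (hlamV : IsLeast (Set.range hV.1.eigenvalues) lamV)
    (v : Fin n → ℂ) (hv : X.mulVec v = (lam : ℂ) • v) (hv1 : star v ⬝ᵥ v = 1) :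
    letI D : Matrix (Fin n) (Fin n) ℂ := A * Xh - B * K * Xh
    lam = (star v ⬝ᵥ V.mulVec v).re ^ 2 / (star v ⬝ᵥ (D + Dᴴ).mulVec v).re ^ 2 ∧
      lam ≥ lamV ^ 2 / (4 * ‖D‖ ^ 2) := by
  set D : Matrix (Fin n) (Fin n) ℂ := A * Xh - B * K * Xh with hDdef
  have hD : D = (A - B * K) * Xh := by rw [hDdef, sub_mul]
  set F := A - B * K with hFdef
  obtain ⟨⟨i, hi⟩, hlb⟩ := hlam
  have hlam0 : 0 < lam := hi ▸ hX.eigenvalues_pos i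
  obtain ⟨⟨j, hj⟩, hlbV⟩ := hlamV
  have hlamV0 : 0 < lamV := hj ▸ hV.eigenvalues_pos j
  have hvne : v ≠ 0 := fun h => by simp [h] at hv1
  set s := Real.sqrt lam with hsdef
  have hs0 : 0 < s := Real.sqrt_pos.mpr hlam0
  have hs2 : s ^ 2 = lam := Real.sq_sqrt hlam0.le
  -- Xh *ᵥ v = s • v
  have hXhv : Xh *ᵥ v = (s : ℂ) • v := by
    have hMpd : (Xh + (s : ℂ) • 1).PosDef := by
      refine Matrix.PosDef.posSemidef_add hXh ?_
      rw [smul_one_eq_diagonal]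
      exact Matrix.PosDef.diagonal fun _ => by exact_mod_cast hs0
    have hinj := Matrix.mulVec_injective_iff_isUnit.mpr hMpd.isUnit
    have hw : Xh *ᵥ (Xh *ᵥ v) = (lam : ℂ) • v := by rw [mulVec_mulVec, hXh2, hv]
    have key : (Xh + (s : ℂ) • 1) *ᵥ (Xh *ᵥ v - (s : ℂ) • v) = (Xh + (s : ℂ) • 1) *ᵥ 0 := by
      rw [mulVec_zero, mulVec_sub, add_mulVec, add_mulVec, mulVec_smul, hw,
        smul_mulVec, one_mulVec, smul_mulVec, one_mulVec, smul_smul]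
      have hss : (s : ℂ) * (s : ℂ) = (lam : ℂ) := by
        rw [← Complex.ofReal_mul, ← hs2]; push_cast; ring
      rw [hss]
      module
    exact sub_eq_zero.mp (hinj key)
  -- basic dot product identities
  set c := star v ⬝ᵥ F *ᵥ v with hcdef
  set a := star v ⬝ᵥ V *ᵥ v with hadef
  have hconj : ∀ M : Matrix (Fin n) (Fin n) ℂ,
      star v ⬝ᵥ Mᴴ *ᵥ v = star (star v ⬝ᵥ M *ᵥ v) := fun M => by
    rw [dotProduct_mulVec, ← star_dotProduct_star, star_star, star_mulVec]
  have hvX : star v ᵥ* X = (lam : ℂ) • star v := by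
    have h1 := congrArg star hv
    rw [star_mulVec, hX.1.eq] at h1
    rw [h1, star_smul]
    congr 1
    simp [Complex.star_def, Complex.conj_ofReal]
  -- Lyapunov dotted with v
  have h0 := congrArg (fun M => star v ⬝ᵥ M *ᵥ v) hLyap
  simp only [add_mulVec, dotProduct_add, zero_mulVec, dotProduct_zero] at h0
  rw [← mulVec_mulVec, hv, mulVec_smul, dotProduct_smul] at h0
  rw [← mulVec_mulVec v X Fᴴ, dotProduct_mulVec (star v) X, hvX, smul_dotProduct, hconj F] at h0
  -- h0 : lam • c + lam • star c + a = 0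
  have hre := congrArg Complex.re h0
  simp only [Complex.add_re, smul_eq_mul, Complex.zero_re] at hre
  rw [Complex.re_ofReal_mul, Complex.re_ofReal_mul] at hre
  have hstre : (star c).re = c.re := by simp [Complex.star_def]
  rw [hstre] at hre
  -- hre : lam * c.re + lam * c.re + a.re = 0
  -- the diagonal quantity
  have hDv : D *ᵥ v = (s : ℂ) • (F *ᵥ v) := by
    rw [hD, ← mulVec_mulVec, hXhv, mulVec_smul]
  have hbc : star v ⬝ᵥ (D + Dᴴ) *ᵥ v = (s : ℂ) * c + star ((s : ℂ) * c) := by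
    rw [add_mulVec, dotProduct_add, hconj D, hDv, dotProduct_smul, smul_eq_mul, hcdef]
  have hbre : (star v ⬝ᵥ (D + Dᴴ) *ᵥ v).re = 2 * (s * c.re) := by
    rw [hbc]
    simp [Complex.add_re, Complex.re_ofReal_mul, Complex.star_def]
    ring
  -- positivity of a.re
  have har : 0 < a.re := by
    have := hV.re_dotProduct_pos hvne
    simpa [hadef] using this
  -- a.re ≥ lamV
  have harV : lamV ≤ a.re := by
    have hpsd := aux_sub_smul_posSemidef hV.1 (fun i => hlbV ⟨i, rfl⟩)
    have h2 := hpsd.dotProduct_mulVec_nonneg v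
    have h3 : star v ⬝ᵥ (V - (lamV : ℂ) • 1) *ᵥ v = a - (lamV : ℂ) := by
      rw [sub_mulVec, dotProduct_sub, smul_mulVec, one_mulVec, dotProduct_smul,
        hv1, smul_eq_mul, mul_one, hadef]
    rw [h3] at h2
    have h5 : ((lamV : ℝ) : ℂ) ≤ a := by simpa [sub_nonneg] using h2
    simpa using (Complex.le_def.mp h5).1
  -- norm bound
  have hnb : |(star v ⬝ᵥ (D + Dᴴ) *ᵥ v).re| ≤ 2 * ‖D‖ := by
    calc |(star v ⬝ᵥ (D + Dᴴ) *ᵥ v).re| ≤ ‖star v ⬝ᵥ (D + Dᴴ) *ᵥ v‖ :=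
          Complex.abs_re_le_norm _
      _ ≤ ‖D + Dᴴ‖ := aux_dot_le _ _ hv1
      _ ≤ ‖D‖ + ‖Dᴴ‖ := norm_add_le _ _
      _ = 2 * ‖D‖ := by rw [Matrix.l2_opNorm_conjTranspose]; ring
  -- arithmetic
  set br := (star v ⬝ᵥ (D + Dᴴ) *ᵥ v).re with hbrdef
  have hkey : 2 * lam * c.re = -a.re := by linarith
  have hcr : c.re ≠ 0 := by
    intro h; rw [h] at hkey; simp at hkey; linarith
  have hbr2 : lam * br ^ 2 = a.re ^ 2 := by
    have h6 : lam * br ^ 2 = (2 * lam * c.re) ^ 2 := by rw [hbre, ← hs2]; ring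
    rw [h6, hkey]; ring
  have hbrne : br ≠ 0 := by
    rw [hbre]
    exact mul_ne_zero two_ne_zero (mul_ne_zero hs0.ne' hcr)
  constructor
  · rw [eq_div_iff (pow_ne_zero 2 hbrne)]
    linarith [hbr2]
  · have hbr2le : br ^ 2 ≤ 4 * ‖D‖ ^ 2 := by nlinarith [hnb, abs_nonneg br, sq_abs br]
    have hbr2pos : 0 < br ^ 2 := by positivity
    have h1 : lamV ^ 2 / (4 * ‖D‖ ^ 2) ≤ a.re ^ 2 / br ^ 2 :=
      div_le_div₀ (sq_nonneg a.re) (by nlinarith) hbr2pos hbr2le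
    have h2 : lam = a.re ^ 2 / br ^ 2 := by
      rw [eq_div_iff (pow_ne_zero 2 hbrne)]; linarith [hbr2]
    rw [ge_iff_le, h2]
    exact h1
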